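/- In the free algebra over a field K generated by x_1, x_2, x_3 with relations x_i x_j = q x_j x_i for i < j (quantum affine 3-space), for any a_1, a_2, a_3 in K^× and b in K, the assignment x_1 ↦ a_1 x_1, x_2 ↦ a_2 x_2 + b x_1 x_3, x_3 ↦ a_3 x_3 extends to a K-algebra automorphism. -/

import Mathlib

/-- The defining relations of quantum affine 3-space: `x i * x j = q • (x j * x i)` for `i < j`. -/
inductive QA3Rel (K : Type*) [Field K] (q : K) :
    FreeAlgebra K (Fin 3) → FreeAlgebra K (Fin 3) → Prop
  | rel (i j : Fin 3) (h : i < j) :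
      QA3Rel K q (FreeAlgebra.ι K i * FreeAlgebra.ι K j)
        (q • (FreeAlgebra.ι K j * FreeAlgebra.ι K i))

/-- Quantum affine 3-space `A_q(K³)`. -/
abbrev QA3 (K : Type*) [Field K] (q : K) := RingQuot (QA3Rel K q)

/-- The generators `x₁, x₂, x₃` of quantum affine 3-space. -/
noncomputable def QA3.x (K : Type*) [Field K] (q : K) (i : Fin 3) : QA3 K q :=
  RingQuot.mkAlgHom K (QA3Rel K q) (FreeAlgebra.ι K i)

section Aux
variable {K : Type*} [Field K] {q : K}

local notation "X" => QA3.x K q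

lemma qa3_rel (i j : Fin 3) (h : i < j) : X i * X j = q • (X j * X i) := by
  have := RingQuot.mkAlgHom_rel K (QA3Rel.rel (K := K) (q := q) i j h)
  simpa [QA3.x, map_mul] using this

lemma qa3_t1 : X 0 * (X 2 * X 0) = q • (X 2 * X 0 * X 0) := by
  rw [← mul_assoc, qa3_rel 0 2 (by decide), smul_mul_assoc]

lemma qa3_t2 : X 2 * X 0 * X 2 = q • (X 2 * (X 2 * X 0)) := by
  rw [mul_assoc, qa3_rel 0 2 (by decide), mul_smul_comm]

noncomputable def triMap (α β γ δ : K) : Fin 3 → QA3 K q :=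
  ![α • X 0, β • X 1 + δ • (X 0 * X 2), γ • X 2]

lemma triMap_one (i : Fin 3) : triMap (q := q) 1 1 1 0 i = X i := by
  fin_cases i <;> simp [triMap]

noncomputable def triHom (α β γ δ : K) : QA3 K q →ₐ[K] QA3 K q :=
  RingQuot.liftAlgHom K ⟨FreeAlgebra.lift K (triMap (q := q) α β γ δ), by
    rintro x y ⟨i, j, h⟩
    have r01 := qa3_rel (K := K) (q := q) 0 1 (by decide)
    have r02 := qa3_rel (K := K) (q := q) 0 2 (by decide)
    have r12 := qa3_rel (K := K) (q := q) 1 2 (by decide)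
    have t1 := qa3_t1 (K := K) (q := q)
    have t2 := qa3_t2 (K := K) (q := q)
    fin_cases i <;> fin_cases j <;> simp_all [triMap, mul_add, add_mul,
      smul_mul_assoc, mul_smul_comm, smul_add, smul_smul] <;> module⟩

lemma triHom_x (α β γ δ : K) (i : Fin 3) :
    triHom (q := q) α β γ δ (X i) = triMap (q := q) α β γ δ i := by
  rw [QA3.x, triHom, RingQuot.liftAlgHom_mkAlgHom_apply, FreeAlgebra.lift_ι_apply]

lemma comp_eval (α β γ δ α' β' γ' δ' : K) (i : Fin 3) :
    (triHom (q := q) α β γ δ) ((triHom (q := q) α' β' γ' δ') (X i)) =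
      triMap (q := q) (α*α') (β*β') (γ*γ') (β'*δ + δ'*(α*γ)) i := by
  rw [triHom_x]
  fin_cases i <;>
    simp [triMap, map_add, map_smul, map_mul, triHom_x, smul_smul, mul_smul_comm,
      smul_mul_assoc, smul_add, add_mul, mul_add] <;> module

lemma triHom_comp (α β γ δ α' β' γ' δ' : K) (h1 : α*α' = 1) (h2 : β*β' = 1)
    (h3 : γ*γ' = 1) (h4 : β'*δ + δ'*(α*γ) = 0) :
    (triHom (q := q) α β γ δ).comp (triHom (q := q) α' β' γ' δ') =
      AlgHom.id K (QA3 K q) := by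
  apply RingQuot.ringQuot_ext'
  apply FreeAlgebra.hom_ext
  funext i
  have := comp_eval (q := q) α β γ δ α' β' γ' δ' i
  simp only [Function.comp_apply, AlgHom.comp_apply, AlgHom.id_apply] at this ⊢
  rw [show (RingQuot.mkAlgHom K (QA3Rel K q)) (FreeAlgebra.ι K i) = X i from rfl, this,
    h1, h2, h3, h4, triMap_one]

end Aux

/-- For any `a₁, a₂, a₃ ∈ K^×` and `b ∈ K`, the assignment
`x₁ ↦ a₁ x₁`, `x₂ ↦ a₂ x₂ + b x₁ x₃`, `x₃ ↦ a₃ x₃` extends to a `K`-algebra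
automorphism of quantum affine 3-space. -/
theorem qa3_automorphism_exists (K : Type*) [Field K] (q : K) (hq0 : q ≠ 0)
    (hq : ∀ n : ℕ, n ≠ 0 → q ^ n ≠ 1) (a₁ a₂ a₃ : Kˣ) (b : K) :
    ∃ φ : QA3 K q ≃ₐ[K] QA3 K q,
      φ (QA3.x K q 0) = (a₁ : K) • QA3.x K q 0 ∧
      φ (QA3.x K q 1) = (a₂ : K) • QA3.x K q 1 + b • (QA3.x K q 0 * QA3.x K q 2) ∧
      φ (QA3.x K q 2) = (a₃ : K) • QA3.x K q 2 := by
  set d : K := -(((a₂⁻¹ : Kˣ) : K) * b * ((a₁⁻¹ : Kˣ) : K) * ((a₃⁻¹ : Kˣ) : K)) with hd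
  refine ⟨AlgEquiv.ofAlgHom (triHom (q := q) (a₁ : K) (a₂ : K) (a₃ : K) b)
    (triHom (q := q) ((a₁⁻¹ : Kˣ) : K) ((a₂⁻¹ : Kˣ) : K) ((a₃⁻¹ : Kˣ) : K) d)
    (triHom_comp _ _ _ _ _ _ _ _ ?_ ?_ ?_ ?_)
    (triHom_comp _ _ _ _ _ _ _ _ ?_ ?_ ?_ ?_), ?_, ?_, ?_⟩
  · simp
  · simp
  · simp
  · field_simp [hd]; rw [hd]; linear_combination (-(((a₂⁻¹ : Kˣ) : K) * b * ((a₃⁻¹ : Kˣ) : K) * (a₃ : K))) * a₁.inv_mul - (((a₂⁻¹ : Kˣ) : K) * b) * a₃.inv_mul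
  · simp
  · simp
  · simp
  · field_simp [hd]; rw [hd]; linear_combination (-(b * ((a₁⁻¹ : Kˣ) : K) * ((a₃⁻¹ : Kˣ) : K))) * a₂.mul_inv
  · simpa [triMap] using triHom_x (q := q) (a₁ : K) (a₂ : K) (a₃ : K) b 0
  · simpa [triMap] using triHom_x (q := q) (a₁ : K) (a₂ : K) (a₃ : K) b 1
  · simpa [triMap] using triHom_x (q := q) (a₁ : K) (a₂ : K) (a₃ : K) b 2
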